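/- Let Γ be an almost semisimple graph of growth λ with the Markov transition probability μ defined by μ(e) = ρ(𝟙)_j/(λ·ρ(𝟙)_i) for an edge e from a large-growth vertex v_i to v_j. Then for every g in the universal cover with |g| = n whose vertex [g] = v_i has large growth, the n-step Markov measure satisfies ℙⁿ({g}) = (ρ(𝟙)_i/ρ(𝟙)_0)·λ^{−n}, and ℙⁿ({g}) = 0 if [g] has small growth. -/

import Mathlib

open Filter

/-- The number of directed paths of length `n` starting at vertex `v`: `(Mⁿ 𝟙)_v`. -/
def pathCount {V : Type*} [Fintype V] [DecidableEq V]
    (M : Matrix V V ℕ) (v : V) (n : ℕ) : ℕ :=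
  (M ^ n).mulVec (fun _ => 1) v

/-- `ρ1 v` is the Cesàro limit `ρ(𝟙)_v = lim_N (1/N) Σ_{n<N} (Mⁿ𝟙)_v / lamⁿ`. -/
def IsRho1 {V : Type*} [Fintype V] [DecidableEq V]
    (M : Matrix V V ℕ) (lam : ℝ) (ρ1 : V → ℝ) : Prop :=
  ∀ v : V, Tendsto
    (fun N : ℕ => (N : ℝ)⁻¹ * ∑ n ∈ Finset.range N, (pathCount M v n : ℝ) / lam ^ n)
    atTop (nhds (ρ1 v))

/-- The transition probability of the Markov chain of Calegari–Fujiwara: an edge from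
a large-growth vertex `i` to `j` has probability `ρ(𝟙)_j / (λ·ρ(𝟙)_i)`; edges from
small-growth vertices only loop. -/
noncomputable def muStep {V : Type*} [DecidableEq V] (ρ1 : V → ℝ) (lam : ℝ) (i j : V) : ℝ :=
  if 0 < ρ1 i then ρ1 j / (lam * ρ1 i) else if i = j then 1 else 0

lemma pathCount_succ_ge {V : Type*} [Fintype V] [DecidableEq V]
    (M : Matrix V V ℕ) {i j : V} (hij : M i j ≠ 0) (n : ℕ) :
    pathCount M j n ≤ pathCount M i (n + 1) := by
  unfold pathCount
  rw [pow_succ', ← Matrix.mulVec_mulVec]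
  calc pathCount M j n = 1 * (M ^ n).mulVec (fun _ => 1) j := (one_mul _).symm
    _ ≤ M i j * (M ^ n).mulVec (fun _ => 1) j :=
        Nat.mul_le_mul_right _ (Nat.one_le_iff_ne_zero.mpr hij)
    _ ≤ ∑ k, M i k * (M ^ n).mulVec (fun _ => 1) k := by
        exact Finset.single_le_sum (f := fun k => M i k * (M ^ n).mulVec (fun _ => 1) k)
          (fun k _ => Nat.zero_le _) (Finset.mem_univ j)
    _ = M.mulVec ((M ^ n).mulVec (fun _ => 1)) i := rfl

lemma rho1_nonneg {V : Type*} [Fintype V] [DecidableEq V]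
    {M : Matrix V V ℕ} {lam : ℝ} (hlam : 1 < lam) {ρ1 : V → ℝ}
    (hρ : IsRho1 M lam ρ1) (v : V) : 0 ≤ ρ1 v := by
  refine ge_of_tendsto' (hρ v) fun N => ?_
  have hl : (0:ℝ) < lam := lt_trans one_pos hlam
  positivity

lemma rho1_pos_of_edge {V : Type*} [Fintype V] [DecidableEq V]
    {M : Matrix V V ℕ} {lam : ℝ} (hlam : 1 < lam) {ρ1 : V → ℝ}
    (hρ : IsRho1 M lam ρ1) {i j : V} (hij : M i j ≠ 0) (hj : 0 < ρ1 j) :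
    0 < ρ1 i := by
  have hl : (0:ℝ) < lam := lt_trans one_pos hlam
  -- a N := average for j divided by lam ≤ c N := ((N+1)/N)·(average for i at N+1)
  have key : ρ1 j / lam ≤ ρ1 i := by
    have ha : Tendsto (fun N : ℕ =>
        lam⁻¹ * ((N : ℝ)⁻¹ * ∑ n ∈ Finset.range N, (pathCount M j n : ℝ) / lam ^ n))
        atTop (nhds (ρ1 j / lam)) := by
      have := (hρ j).const_mul lam⁻¹
      simpa [div_eq_inv_mul] using this
    have hc : Tendsto (fun N : ℕ =>
        (1 + (N : ℝ)⁻¹) * (((N:ℝ)+1)⁻¹ * ∑ n ∈ Finset.range (N+1), (pathCount M i n : ℝ) / lam ^ n))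
        atTop (nhds (ρ1 i)) := by
      have h1 : Tendsto (fun N : ℕ => (1 : ℝ) + (N:ℝ)⁻¹) atTop (nhds 1) := by
        simpa using tendsto_const_nhds.add (tendsto_inv_atTop_nhds_zero_nat (𝕜 := ℝ))
      have h2 : Tendsto (fun N : ℕ =>
          ((N:ℝ)+1)⁻¹ * ∑ n ∈ Finset.range (N+1), (pathCount M i n : ℝ) / lam ^ n)
          atTop (nhds (ρ1 i)) := by
        have := (hρ i).comp (tendsto_add_atTop_nat 1)
        simpa [Function.comp_def, Nat.cast_add] using this
      simpa using h1.mul h2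
    refine le_of_tendsto_of_tendsto' ha hc fun N => ?_
    rcases Nat.eq_zero_or_pos N with rfl | hN
    · simp
    have hN0 : (0:ℝ) < N := by exact_mod_cast hN
    have hN1 : (0:ℝ) < (N:ℝ) + 1 := by positivity
    have step : ∑ n ∈ Finset.range N, (pathCount M j n : ℝ) / lam ^ n / lam
        ≤ ∑ n ∈ Finset.range (N+1), (pathCount M i n : ℝ) / lam ^ n := by
      rw [Finset.sum_range_succ']
      have : ∑ n ∈ Finset.range N, (pathCount M j n : ℝ) / lam ^ n / lam
          ≤ ∑ n ∈ Finset.range N, (pathCount M i (n+1) : ℝ) / lam ^ (n+1) := by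
        refine Finset.sum_le_sum fun n _ => ?_
        rw [div_div, ← pow_succ]
        gcongr
        exact_mod_cast pathCount_succ_ge M hij n
      refine this.trans (le_add_of_nonneg_right ?_)
      positivity
    calc lam⁻¹ * ((N : ℝ)⁻¹ * ∑ n ∈ Finset.range N, (pathCount M j n : ℝ) / lam ^ n)
        = (N : ℝ)⁻¹ * ∑ n ∈ Finset.range N, (pathCount M j n : ℝ) / lam ^ n / lam := by
          rw [← Finset.sum_div]; ring
      _ ≤ (N : ℝ)⁻¹ * ∑ n ∈ Finset.range (N+1), (pathCount M i n : ℝ) / lam ^ n := by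
          exact mul_le_mul_of_nonneg_left step (by positivity)
      _ = (1 + (N : ℝ)⁻¹) * (((N:ℝ)+1)⁻¹ * ∑ n ∈ Finset.range (N+1), (pathCount M i n : ℝ) / lam ^ n) := by
          field_simp
  exact lt_of_lt_of_le (by positivity) key

/-- for the Markov chain on an almost semisimple graph `Γ` of growth
`λ > 1` started at the initial vertex `v0`, a path `g` of length `n` in the universal
cover (from `v0`) has probability `ℙⁿ({g}) = (ρ(𝟙)_{[g]}/ρ(𝟙)_0)·λ^{−n}` if its
endpoint `[g]` has large growth, and probability `0` if `[g]` has small growth. -/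
theorem markov_measure_formula {V : Type*} [Fintype V] [DecidableEq V]
    (M : Matrix V V ℕ) (lam : ℝ) (hlam : 1 < lam)
    (v0 : V) (ρ1 : V → ℝ) (hρ : IsRho1 M lam ρ1) (hv0 : 0 < ρ1 v0)
    (n : ℕ) (p : Fin (n + 1) → V) (hstart : p 0 = v0)
    (hedges : ∀ k : Fin n, M (p k.castSucc) (p k.succ) ≠ 0) :
    (0 < ρ1 (p (Fin.last n)) →
      ∏ k : Fin n, muStep ρ1 lam (p k.castSucc) (p k.succ) =
        ρ1 (p (Fin.last n)) / ρ1 v0 * (lam ^ n)⁻¹) ∧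
    (ρ1 (p (Fin.last n)) = 0 →
      ∏ k : Fin n, muStep ρ1 lam (p k.castSucc) (p k.succ) = 0) := by
  have hl : (0:ℝ) < lam := lt_trans one_pos hlam
  subst hstart
  induction n with
  | zero =>
    constructor
    · intro _
      have : p (Fin.last 0) = p 0 := rfl
      rw [this]
      simp [div_self (ne_of_gt hv0)]
    · intro h0
      exact absurd h0 (ne_of_gt (by simpa [Fin.last] using hv0))
  | succ n ih =>
    set q : Fin (n + 1) → V := fun k => p k.castSucc with hq
    have hq0 : q 0 = p 0 := rfl
    have hqe : ∀ k : Fin n, M (q k.castSucc) (q k.succ) ≠ 0 := by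
      intro k
      have := hedges k.castSucc
      simpa [hq] using this
    have IH := ih q hqe hv0
    rw [Fin.prod_univ_castSucc]
    have hsplit : ∀ k : Fin n,
        muStep ρ1 lam (p k.castSucc.castSucc) (p k.castSucc.succ)
          = muStep ρ1 lam (q k.castSucc) (q k.succ) := by
      intro k
      simp [hq]
    rw [Finset.prod_congr rfl fun k _ => hsplit k]
    set i : V := q (Fin.last n) with hi
    have hlasteq : p (Fin.last n).castSucc = i := rfl
    have hlastsucc : (Fin.last n).succ = Fin.last (n + 1) := rfl
    set j : V := p (Fin.last (n + 1)) with hj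
    have hMij : M i j ≠ 0 := by
      have := hedges (Fin.last n)
      simpa [hlasteq, hlastsucc] using this
    have hlast : muStep ρ1 lam (p (Fin.last n).castSucc) (p (Fin.last n).succ)
        = muStep ρ1 lam i j := rfl
    rw [hlast]
    have hq0' : q 0 = p 0 := rfl
    constructor
    · intro hjpos
      have hipos : 0 < ρ1 i := rho1_pos_of_edge hlam hρ hMij hjpos
      have h1 := IH.1 (by simpa [hi] using hipos)
      rw [h1, muStep, if_pos hipos]
      have h0 : ρ1 (p 0) ≠ 0 := ne_of_gt hv0
      have hi0 : ρ1 i ≠ 0 := ne_of_gt hipos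
      have hl0 : lam ≠ 0 := ne_of_gt hl
      rw [hq0'] at *
      field_simp
      ring
    · intro hj0
      rcases lt_or_eq_of_le (rho1_nonneg hlam hρ i) with hipos | hieq
      · rw [muStep, if_pos hipos, hj0]
        simp
      · have := IH.2 (by simpa [hi] using hieq.symm)
        rw [this, zero_mul]
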